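/- For the single-subcarrier context-aware power allocation game with linear costs and any power budget P_max > 0, a pure-strategy Nash equilibrium exists: there is at least one profile (u₁*,…,u_M*) ∈ A^M such that for every player i and every v ∈ A, J_i(u₁*,…,v,…,u_M*) ≤ J_i(u₁*,…,u_M*). -/

import Mathlib

/-- **Existence of a pure-strategy Nash equilibrium for the single-subcarrier
context-aware power allocation game with linear costs**, for any power budget
`Pmax > 0`.

Players are the `M` base stations, the common (convex, compact) action set is
`A = {u : Fin N → ℝ | 0 ≤ u j ∀ j, ∑ j, u j ≤ Pmax}`, and the utility of
player `i` at profile `u` is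
`J i u = ∑ j, log (1 + β i j * u i j / (∑_{l ≠ i} β l j * u l j + σ² j))
         − ∑ j, (a i j * u i j + b i j)`.
Then there is at least one profile `(u₁*, …, u_M*) ∈ A^M` such that no player
can improve its utility by a unilateral deviation. -/
theorem single_subcarrier_game_PSNE_exists
    (M N : ℕ)
    (β : Fin M → Fin N → ℝ) (σsq : Fin N → ℝ)
    (a b : Fin M → Fin N → ℝ)
    (Pmax : ℝ) (hP : 0 < Pmax)
    (hβ : ∀ i j, 0 < β i j) (hσ : ∀ j, 0 < σsq j)
    (A : Set (Fin N → ℝ))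
    (hA : A = {u : Fin N → ℝ | (∀ j, 0 ≤ u j) ∧ ∑ j, u j ≤ Pmax})
    (J : Fin M → (Fin M → Fin N → ℝ) → ℝ)
    (hJ : ∀ i u, J i u =
      (∑ j, Real.log (1 + β i j * u i j /
        ((∑ l ∈ Finset.univ.erase i, β l j * u l j) + σsq j)))
      - ∑ j, (a i j * u i j + b i j)) :
    ∃ ustar : Fin M → Fin N → ℝ,
      (∀ i, ustar i ∈ A) ∧
      (∀ i : Fin M, ∀ v ∈ A, J i (Function.update ustar i v) ≤ J i ustar) := by
  subst hA
  -- the cost of player `i` with own action `w`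
  set c : Fin M → (Fin N → ℝ) → ℝ := fun i w => ∑ j, (a i j * w j + b i j) with hc
  -- total received power (+ noise) at user `j`
  set T : Fin N → (Fin M → Fin N → ℝ) → ℝ :=
    fun j u => (∑ l, β l j * u l j) + σsq j with hT
  -- the exact potential
  set Φ : (Fin M → Fin N → ℝ) → ℝ :=
    fun u => (∑ j, Real.log (T j u)) - ∑ l, c l (u l) with hΦ
  -- the set of profiles
  set K : Set (Fin M → Fin N → ℝ) :=
    Set.univ.pi (fun _ : Fin M =>
      {u : Fin N → ℝ | (∀ j, 0 ≤ u j) ∧ ∑ j, u j ≤ Pmax}) with hK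
  -- A is compact
  have hAsub : {u : Fin N → ℝ | (∀ j, 0 ≤ u j) ∧ ∑ j, u j ≤ Pmax} ⊆
      Set.univ.pi (fun _ : Fin N => Set.Icc (0:ℝ) Pmax) := by
    rintro u ⟨h0, hs⟩ j _
    refine ⟨h0 j, ?_⟩
    calc u j ≤ ∑ j, u j := Finset.single_le_sum (fun k _ => h0 k) (Finset.mem_univ j)
    _ ≤ Pmax := hs
  have hAclosed : IsClosed {u : Fin N → ℝ | (∀ j, 0 ≤ u j) ∧ ∑ j, u j ≤ Pmax} := by
    have h1 : IsClosed {u : Fin N → ℝ | ∀ j, 0 ≤ u j} := by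
      have : {u : Fin N → ℝ | ∀ j, 0 ≤ u j} = ⋂ j, {u : Fin N → ℝ | 0 ≤ u j} := by
        ext u; simp
      rw [this]
      exact isClosed_iInter fun j => isClosed_le continuous_const (continuous_apply j)
    have h2 : IsClosed {u : Fin N → ℝ | ∑ j, u j ≤ Pmax} :=
      isClosed_le (by continuity) continuous_const
    exact h1.inter h2
  have hAcomp : IsCompact {u : Fin N → ℝ | (∀ j, 0 ≤ u j) ∧ ∑ j, u j ≤ Pmax} :=
    (isCompact_univ_pi fun _ => isCompact_Icc).of_isClosed_subset hAclosed hAsub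
  have hKcomp : IsCompact K := isCompact_univ_pi fun _ => hAcomp
  have h0A : (0 : Fin N → ℝ) ∈ {u : Fin N → ℝ | (∀ j, 0 ≤ u j) ∧ ∑ j, u j ≤ Pmax} := by
    constructor
    · intro j; simp
    · simp; linarith
  have hKne : K.Nonempty := ⟨0, fun i _ => h0A⟩
  -- positivity of T on K
  have hTpos : ∀ u ∈ K, ∀ j, 0 < T j u := by
    intro u hu j
    have hsum : 0 ≤ ∑ l, β l j * u l j :=
      Finset.sum_nonneg fun l _ => mul_nonneg (hβ l j).le ((hu l trivial).1 j)
    have := hσ j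
    simp only [hT]
    linarith
  -- continuity of Φ on K
  have hTcont : ∀ j, Continuous (T j) := by
    intro j
    apply Continuous.add _ continuous_const
    exact continuous_finset_sum _ fun l _ =>
      continuous_const.mul (continuous_apply_apply l j)
  have hΦcont : ContinuousOn Φ K := by
    have h1 : ContinuousOn (fun u : Fin M → Fin N → ℝ => ∑ j, Real.log (T j u)) K := by
      exact continuousOn_finset_sum Finset.univ fun j _ =>
        ContinuousOn.log (hTcont j).continuousOn (fun u hu => (hTpos u hu j).ne')
    have h2 : Continuous (fun u : Fin M → Fin N → ℝ => ∑ l, c l (u l)) := by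
      simp only [hc]
      exact continuous_finset_sum Finset.univ fun l _ =>
        continuous_finset_sum Finset.univ fun j _ =>
          (continuous_const.mul (continuous_apply_apply l j)).add
            continuous_const
    exact h1.sub h2.continuousOn
  obtain ⟨ustar, hustarK, hmax⟩ := hKcomp.exists_isMaxOn hKne hΦcont
  -- key decomposition of J on K
  have hJdecomp : ∀ i, ∀ u ∈ K, J i u =
      Φ u + ((∑ l ∈ Finset.univ.erase i, c l (u l))
        - ∑ j, Real.log ((∑ l ∈ Finset.univ.erase i, β l j * u l j) + σsq j)) := by
    intro i u hu
    rw [hJ]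
    have hlog : ∀ j, Real.log (1 + β i j * u i j /
        ((∑ l ∈ Finset.univ.erase i, β l j * u l j) + σsq j)) =
        Real.log (T j u)
          - Real.log ((∑ l ∈ Finset.univ.erase i, β l j * u l j) + σsq j) := by
      intro j
      set O : ℝ := (∑ l ∈ Finset.univ.erase i, β l j * u l j) + σsq j with hO
      have hOpos : 0 < O := by
        have hsum : 0 ≤ ∑ l ∈ Finset.univ.erase i, β l j * u l j :=
          Finset.sum_nonneg fun l _ => mul_nonneg (hβ l j).le ((hu l trivial).1 j)
        have := hσ j
        simp only [hO]; linarith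
      have hx : 0 ≤ β i j * u i j := mul_nonneg (hβ i j).le ((hu i trivial).1 j)
      have hTeq : T j u = O + β i j * u i j := by
        have hsum : (∑ l ∈ Finset.univ.erase i, β l j * u l j) + β i j * u i j
            = ∑ l, β l j * u l j :=
          Finset.sum_erase_add Finset.univ _ (Finset.mem_univ i)
        simp only [hT, hO]
        linarith
      have h1 : 1 + β i j * u i j / O = (O + β i j * u i j) / O := by
        field_simp
      rw [h1, Real.log_div (by positivity) hOpos.ne', hTeq]
    rw [Finset.sum_congr rfl fun j _ => hlog j]
    rw [Finset.sum_sub_distrib]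
    have hcsplit : ∑ l, c l (u l) =
        c i (u i) + ∑ l ∈ Finset.univ.erase i, c l (u l) := by
      have hsum : (∑ l ∈ Finset.univ.erase i, c l (u l)) + c i (u i) = ∑ l, c l (u l) :=
        Finset.sum_erase_add Finset.univ _ (Finset.mem_univ i)
      linarith
    simp only [hΦ]; rw [hcsplit]; simp only [hc]
    ring
  refine ⟨ustar, fun i => hustarK i trivial, ?_⟩
  intro i v hv
  set u' := Function.update ustar i v with hu'
  have hu'K : u' ∈ K := by
    intro l _
    by_cases h : l = i
    · subst h; simp [hu', hv]
    · simp [hu', Function.update_of_ne h, hustarK l trivial]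
  have hΦle : Φ u' ≤ Φ ustar := hmax hu'K
  have heq1 : ∀ l ∈ Finset.univ.erase i, u' l = ustar l := by
    intro l hl
    exact Function.update_of_ne (Finset.ne_of_mem_erase hl) _ _
  rw [hJdecomp i u' hu'K, hJdecomp i ustar hustarK]
  have he1 : (∑ l ∈ Finset.univ.erase i, c l (u' l)) =
      ∑ l ∈ Finset.univ.erase i, c l (ustar l) :=
    Finset.sum_congr rfl fun l hl => by rw [heq1 l hl]
  have he2 : ∀ j, (∑ l ∈ Finset.univ.erase i, β l j * u' l j) =
      ∑ l ∈ Finset.univ.erase i, β l j * ustar l j := by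
    intro j
    exact Finset.sum_congr rfl fun l hl => by rw [heq1 l hl]
  simp only [he1, he2]
  linarith
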